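/- Multilinearity sum identity for the shifted convolution: for m ∈ {0,1} and n ≥ 1, Σ_{j=m}^{n-1+m} det(A_m,…,A_{j-1}, \hat{B}_j, A_{j+1},…,A_{n-1+m}) = (2n−2+m) c₁ H^m_n, where \hat{B}_j has i-th entry Σ_{k=1}^{j+i} c_k c_{j+i+1−k}. -/

import Mathlib

/-- Hankel determinant `H^m_n = det(c_{i+j+m})`. -/
noncomputable def Hk (c : ℕ → ℝ) (m n : ℕ) : ℝ :=
  (Matrix.of fun i j : Fin n => c (i.val + j.val + m)).det

/-- `G^m_n`: the Hankel determinant `H^m_n` with its last row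
`(c_{m+n-1},…,c_{m+2n-2})` replaced by `(c_{m+n},…,c_{m+2n-1})`;
by convention `G^m_0 = 0`. -/
noncomputable def Gk (c : ℕ → ℝ) (m n : ℕ) : ℝ :=
  if n = 0 then 0 else
  (Matrix.of fun i j : Fin n =>
    if i.val = n - 1 then c (m + n + j.val) else c (i.val + j.val + m)).det

/-- `E^m_n`: determinant of the `n×n` matrix with rows
`(c_{m+k},…,c_{m+k+n-2}, c_{m+k+n+1})`, i.e. the last column advanced by 2. -/
noncomputable def Ek (c : ℕ → ℝ) (m n : ℕ) : ℝ :=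
  (Matrix.of fun i j : Fin n =>
    if j.val = n - 1 then c (m + i.val + n + 1) else c (m + i.val + j.val)).det

/-- `F^m_n`: determinant of the `n×n` matrix with rows
`(c_{m+k},…,c_{m+k+n-3}, c_{m+k+n-1}, c_{m+k+n})`, i.e. column `n−2` skipped;
by convention `F^m_1 = 0`. -/
noncomputable def Fk (c : ℕ → ℝ) (m n : ℕ) : ℝ :=
  if n = 1 then 0 else
  (Matrix.of fun i j : Fin n =>
    if n - 2 ≤ j.val then c (m + i.val + j.val + 1) else c (m + i.val + j.val)).det

/-- `S^m_n`: determinant of `(c_{m+σ(i)+σ(j)})` where `σ(i) = i` for `i ≤ n−2`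
and `σ(n−1) = n`. -/
noncomputable def Sk (c : ℕ → ℝ) (m n : ℕ) : ℝ :=
  (Matrix.of fun i j : Fin n =>
    c (m + (if i.val = n - 1 then n else i.val) +
        (if j.val = n - 1 then n else j.val))).det

/-! ### Auxiliary material for `sum_det_Bhat` -/

lemma Icc_one_eq_Ioc (x : ℕ) : Finset.Icc 1 x = Finset.Ioc 0 x := by
  ext k; simp [Finset.mem_Icc, Finset.mem_Ioc, Nat.succ_le_iff]

/-- Splitting of the convolution sum. -/
lemma conv_split (c : ℕ → ℝ) (a i : ℕ) :
    ∑ k ∈ Finset.Icc 1 (a + i), c k * c (a + i + 1 - k)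
      = (∑ k ∈ Finset.Icc 1 a, c k * c (a + i + 1 - k))
        + ∑ v ∈ Finset.Icc 1 i, c v * c (a + i + 1 - v) := by
  rw [Icc_one_eq_Ioc, Icc_one_eq_Ioc, Icc_one_eq_Ioc,
    ← Finset.sum_Ioc_consecutive (fun k => c k * c (a + i + 1 - k)) (Nat.zero_le a)
      (Nat.le_add_right a i)]
  congr 1
  refine Finset.sum_nbij' (fun k => a + i + 1 - k) (fun v => a + i + 1 - v) ?_ ?_ ?_ ?_ ?_
  · intro k hk; simp only [Finset.mem_Ioc] at *; omega
  · intro v hv; simp only [Finset.mem_Ioc] at *; omega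
  · intro k hk; simp only [Finset.mem_Ioc] at hk; omega
  · intro v hv; simp only [Finset.mem_Ioc] at hv; omega
  · intro k hk
    simp only [Finset.mem_Ioc] at hk
    have h1 : a + i + 1 - (a + i + 1 - k) = k := by omega
    rw [h1, mul_comm]

/-- The base Hankel matrix. -/
noncomputable def Mhk (c : ℕ → ℝ) (m n : ℕ) : Matrix (Fin n) (Fin n) ℝ :=
  Matrix.of fun i q : Fin n => c (m + q.val + i.val)

lemma step1 (c : ℕ → ℝ) (m n : ℕ) (p : Fin n) :
    (Matrix.of fun i q : Fin n =>
        if q = p then ∑ k ∈ Finset.Icc 1 (m + p.val + i.val),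
            c k * c (m + p.val + i.val + 1 - k)
        else c (m + q.val + i.val)).det
    = ∑ i : Fin n, (Mhk c m n).adjugate p i *
        ∑ k ∈ Finset.Icc 1 (m + p.val + i.val), c k * c (m + p.val + i.val + 1 - k) := by
  have h : (Matrix.of fun i q : Fin n =>
        if q = p then ∑ k ∈ Finset.Icc 1 (m + p.val + i.val),
            c k * c (m + p.val + i.val + 1 - k)
        else c (m + q.val + i.val))
      = (Mhk c m n).updateCol p (fun i => ∑ k ∈ Finset.Icc 1 (m + p.val + i.val),
            c k * c (m + p.val + i.val + 1 - k)) := by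
    ext i q
    rw [Matrix.updateCol_apply]
    rfl
  rw [h, ← Matrix.cramer_apply, Matrix.cramer_eq_adjugate_mulVec]
  simp [Matrix.mulVec, dotProduct]

lemma part1 (c : ℕ → ℝ) (m n : ℕ) (hm : m ≤ 1) (p : Fin n) :
    ∑ i : Fin n, (Mhk c m n).adjugate p i *
        ∑ k ∈ Finset.Icc 1 (m + p.val), c k * c (m + p.val + i.val + 1 - k)
    = if 1 ≤ m + p.val then c 1 * (Mhk c m n).det else 0 := by
  have hcol : ∀ k ∈ Finset.Icc 1 (m + p.val),
      ∑ i : Fin n, (Mhk c m n).adjugate p i * (c k * c (m + p.val + i.val + 1 - k))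
      = c k * ((Mhk c m n).det * if k = 1 then 1 else 0) := by
    intro k hk
    simp only [Finset.mem_Icc] at hk
    have hle : p.val + 1 - k < n := by have := p.isLt; omega
    set j : Fin n := ⟨p.val + 1 - k, hle⟩ with hj
    have harg : ∀ i : Fin n, c (m + p.val + i.val + 1 - k) = Mhk c m n i j := by
      intro i
      show c (m + p.val + i.val + 1 - k) = c (m + j.val + i.val)
      congr 1
      simp only [hj]
      omega
    calc ∑ i : Fin n, (Mhk c m n).adjugate p i * (c k * c (m + p.val + i.val + 1 - k))
        = c k * ∑ i : Fin n, (Mhk c m n).adjugate p i * Mhk c m n i j := by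
          rw [Finset.mul_sum]; exact Finset.sum_congr rfl fun i _ => by rw [harg i]; ring
      _ = c k * ((Mhk c m n).adjugate * Mhk c m n) p j := by rw [Matrix.mul_apply]
      _ = c k * ((Mhk c m n).det * if k = 1 then 1 else 0) := by
          rw [Matrix.adjugate_mul]
          congr 1
          simp only [Matrix.smul_apply, Matrix.one_apply, smul_eq_mul]
          congr 1
          have : (p = j) ↔ (k = 1) := by
            rw [Fin.ext_iff]; simp only [hj]; omega
          simp only [this]
  calc ∑ i : Fin n, (Mhk c m n).adjugate p i *
        ∑ k ∈ Finset.Icc 1 (m + p.val), c k * c (m + p.val + i.val + 1 - k)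
      = ∑ k ∈ Finset.Icc 1 (m + p.val), ∑ i : Fin n,
          (Mhk c m n).adjugate p i * (c k * c (m + p.val + i.val + 1 - k)) := by
        rw [Finset.sum_comm]
        exact Finset.sum_congr rfl fun i _ => by rw [Finset.mul_sum]
    _ = ∑ k ∈ Finset.Icc 1 (m + p.val),
          (if k = 1 then c k * (Mhk c m n).det else 0) := by
        refine Finset.sum_congr rfl fun k hk => ?_
        rw [hcol k hk]
        split_ifs <;> ring
    _ = if 1 ≤ m + p.val then c 1 * (Mhk c m n).det else 0 := by
        rw [Finset.sum_ite_eq' (Finset.Icc 1 (m + p.val)) 1 (fun k => c k * (Mhk c m n).det)]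
        simp [Finset.mem_Icc]

/-- The shift-type matrix used for the trace argument. -/
def Qv (n v : ℕ) : Matrix (Fin n) (Fin n) ℝ :=
  Matrix.of fun i j : Fin n => if i.val + 1 = j.val + v ∧ v ≤ i.val then 1 else 0

lemma Qv_mul (c : ℕ → ℝ) (m n v : ℕ) (hv : 1 ≤ v) (i q : Fin n) :
    (Qv n v * Mhk c m n) i q
      = if v ≤ i.val then c (m + q.val + i.val + 1 - v) else 0 := by
  rw [Matrix.mul_apply]
  by_cases h : v ≤ i.val
  · have hlt : i.val + 1 - v < n := by have := i.isLt; omega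
    set j0 : Fin n := ⟨i.val + 1 - v, hlt⟩ with hj0
    have : ∀ j : Fin n, Qv n v i j * Mhk c m n j q
        = if j = j0 then Mhk c m n j q else 0 := by
      intro j
      have hiff : (i.val + 1 = j.val + v ∧ v ≤ i.val) ↔ j = j0 := by
        rw [Fin.ext_iff]; simp only [hj0]; omega
      simp only [Qv, Matrix.of_apply, hiff]
      split_ifs <;> simp
    rw [Finset.sum_congr rfl fun j _ => this j, Finset.sum_ite_eq' Finset.univ j0]
    simp only [Finset.mem_univ, if_pos h, if_true]
    show c (m + q.val + j0.val) = c (m + q.val + i.val + 1 - v)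
    congr 1
    simp only [hj0]
    omega
  · rw [if_neg h]
    refine Finset.sum_eq_zero fun j _ => ?_
    simp only [Qv, Matrix.of_apply]
    rw [if_neg (by omega), zero_mul]

lemma Qv_trace (n v : ℕ) : (Qv n v).trace = if v = 1 then ((n - 1 : ℕ) : ℝ) else 0 := by
  rw [Matrix.trace]
  simp only [Matrix.diag_apply, Qv, Matrix.of_apply]
  by_cases hv : v = 1
  · subst hv
    simp only [if_pos rfl, true_and, eq_self_iff_true]
    rcases n with _ | n'
    · simp
    · rw [Fin.sum_univ_succ]
      simp [Finset.sum_const]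
  · rw [if_neg hv]
    refine Finset.sum_eq_zero fun i _ => ?_
    rw [if_neg (by omega)]

lemma Tval (c : ℕ → ℝ) (m n v : ℕ) (hv : 1 ≤ v) :
    ∑ p : Fin n, ∑ i : Fin n, (Mhk c m n).adjugate p i *
        (if v ≤ i.val then c (m + p.val + i.val + 1 - v) else 0)
    = (Mhk c m n).det * (if v = 1 then ((n - 1 : ℕ) : ℝ) else 0) := by
  have h1 : ∑ p : Fin n, ∑ i : Fin n, (Mhk c m n).adjugate p i *
        (if v ≤ i.val then c (m + p.val + i.val + 1 - v) else 0)
      = ((Mhk c m n).adjugate * (Qv n v * Mhk c m n)).trace := by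
    rw [Matrix.trace]
    refine Finset.sum_congr rfl fun p _ => ?_
    rw [Matrix.diag_apply, Matrix.mul_apply]
    exact Finset.sum_congr rfl fun i _ => by rw [Qv_mul c m n v hv]
  rw [h1, Matrix.trace_mul_comm, Matrix.mul_assoc, Matrix.mul_adjugate, Matrix.mul_smul,
    Matrix.mul_one, Matrix.trace_smul, smul_eq_mul, Qv_trace]

lemma part2 (c : ℕ → ℝ) (m n : ℕ) :
    (∑ p : Fin n, ∑ i : Fin n, (Mhk c m n).adjugate p i *
        ∑ v ∈ Finset.Icc 1 i.val, c v * c (m + p.val + i.val + 1 - v))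
    = ((n - 1 : ℕ) : ℝ) * (c 1 * (Mhk c m n).det) := by
  have hinner : ∀ p i : Fin n,
      (Mhk c m n).adjugate p i *
          ∑ v ∈ Finset.Icc 1 i.val, c v * c (m + p.val + i.val + 1 - v)
      = ∑ v ∈ Finset.Icc 1 (n - 1), c v * ((Mhk c m n).adjugate p i *
          (if v ≤ i.val then c (m + p.val + i.val + 1 - v) else 0)) := by
    intro p i
    have h1 : (∑ v ∈ Finset.Icc 1 i.val, c v * c (m + p.val + i.val + 1 - v))
        = ∑ v ∈ Finset.Icc 1 (n - 1),
            (if v ≤ i.val then c v * c (m + p.val + i.val + 1 - v) else 0) := by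
      have e1 : ∀ v ∈ Finset.Icc 1 i.val, c v * c (m + p.val + i.val + 1 - v)
          = (if v ≤ i.val then c v * c (m + p.val + i.val + 1 - v) else 0) := by
        intro v hv
        simp only [Finset.mem_Icc] at hv
        rw [if_pos hv.2]
      rw [Finset.sum_congr rfl e1]
      refine Finset.sum_subset (fun v hv => ?_) (fun v hv hns => ?_)
      · simp only [Finset.mem_Icc] at *; have := i.isLt; omega
      · rw [if_neg ?_]
        simp only [Finset.mem_Icc] at *
        omega
    rw [h1, Finset.mul_sum]
    exact Finset.sum_congr rfl fun v hv => by split_ifs <;> ring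
  calc (∑ p : Fin n, ∑ i : Fin n, (Mhk c m n).adjugate p i *
        ∑ v ∈ Finset.Icc 1 i.val, c v * c (m + p.val + i.val + 1 - v))
      = ∑ p : Fin n, ∑ v ∈ Finset.Icc 1 (n - 1), ∑ i : Fin n,
          c v * ((Mhk c m n).adjugate p i *
            (if v ≤ i.val then c (m + p.val + i.val + 1 - v) else 0)) := by
        refine Finset.sum_congr rfl fun p _ => ?_
        rw [Finset.sum_congr rfl fun i (_ : i ∈ Finset.univ) => hinner p i, Finset.sum_comm]
    _ = ∑ v ∈ Finset.Icc 1 (n - 1), c v * ∑ p : Fin n, ∑ i : Fin n,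
          (Mhk c m n).adjugate p i *
            (if v ≤ i.val then c (m + p.val + i.val + 1 - v) else 0) := by
        rw [Finset.sum_comm]
        refine Finset.sum_congr rfl fun v _ => ?_
        rw [Finset.mul_sum]
        exact Finset.sum_congr rfl fun p _ => by rw [Finset.mul_sum]
    _ = ∑ v ∈ Finset.Icc 1 (n - 1),
          (if v = 1 then c v * ((Mhk c m n).det * ((n - 1 : ℕ) : ℝ)) else 0) := by
        refine Finset.sum_congr rfl fun v hv => ?_
        simp only [Finset.mem_Icc] at hv
        rw [Tval c m n v hv.1]
        split_ifs <;> ring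
    _ = ((n - 1 : ℕ) : ℝ) * (c 1 * (Mhk c m n).det) := by
        rw [Finset.sum_ite_eq' (Finset.Icc 1 (n - 1)) 1
          (fun v => c v * ((Mhk c m n).det * ((n - 1 : ℕ) : ℝ)))]
        by_cases h2 : 1 ≤ n - 1
        · rw [if_pos (by simp [Finset.mem_Icc, h2])]; ring
        · have h0 : n - 1 = 0 := by omega
          rw [if_neg (by simp [Finset.mem_Icc]; omega), h0]
          simp

/-- Multilinearity sum identity for the shifted convolution:
`Σ_{j=m}^{n-1+m} det(A_m,…,B̂_j,…,A_{n-1+m}) = (2n−2+m) c₁ H^m_n`, where `B̂_j`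
has `i`-th entry `Σ_{k=1}^{j+i} c_k c_{j+i+1−k}`. -/
theorem sum_det_Bhat (c : ℕ → ℝ) (m : ℕ) (hm : m = 0 ∨ m = 1) (n : ℕ) (hn : 1 ≤ n) :
    (∑ p : Fin n,
      (Matrix.of fun i q : Fin n =>
        if q = p then ∑ k ∈ Finset.Icc 1 (m + p.val + i.val),
            c k * c (m + p.val + i.val + 1 - k)
        else c (m + q.val + i.val)).det) =
      ((2 * n - 2 + m : ℕ) : ℝ) * c 1 * Hk c m n := by
  classical
  have hm1 : m ≤ 1 := by omega
  have hHk : Hk c m n = (Mhk c m n).det := by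
    unfold Hk Mhk
    congr 1
    ext i j
    simp only [Matrix.of_apply]
    congr 1
    omega
  have key : (∑ p : Fin n,
      (Matrix.of fun i q : Fin n =>
        if q = p then ∑ k ∈ Finset.Icc 1 (m + p.val + i.val),
            c k * c (m + p.val + i.val + 1 - k)
        else c (m + q.val + i.val)).det)
      = (∑ p : Fin n, ∑ i : Fin n, (Mhk c m n).adjugate p i *
          ∑ k ∈ Finset.Icc 1 (m + p.val), c k * c (m + p.val + i.val + 1 - k))
        + ∑ p : Fin n, ∑ i : Fin n, (Mhk c m n).adjugate p i *
          ∑ v ∈ Finset.Icc 1 i.val, c v * c (m + p.val + i.val + 1 - v) := by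
    rw [← Finset.sum_add_distrib]
    refine Finset.sum_congr rfl fun p _ => ?_
    rw [step1 c m n p, ← Finset.sum_add_distrib]
    refine Finset.sum_congr rfl fun i _ => ?_
    rw [← mul_add, conv_split c (m + p.val) i.val]
  have hpart1 : (∑ p : Fin n, ∑ i : Fin n, (Mhk c m n).adjugate p i *
        ∑ k ∈ Finset.Icc 1 (m + p.val), c k * c (m + p.val + i.val + 1 - k))
      = ((n - 1 + m : ℕ) : ℝ) * (c 1 * (Mhk c m n).det) := by
    rw [Finset.sum_congr rfl fun p (_ : p ∈ Finset.univ) => part1 c m n hm1 p]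
    rcases hm with h | h <;> subst h
    · obtain ⟨n', rfl⟩ : ∃ n', n = n' + 1 := ⟨n - 1, by omega⟩
      rw [Fin.sum_univ_succ]
      simp only [Fin.val_zero, Fin.val_succ]
      simp only [show ¬ (1 ≤ 0 + 0) from by omega, if_false]
      rw [zero_add]
      have e1 : ∀ i : Fin n', (if 1 ≤ 0 + (i.val + 1) then c 1 * (Mhk c 0 (n' + 1)).det else 0)
          = c 1 * (Mhk c 0 (n' + 1)).det := fun i => if_pos (by omega)
      rw [Finset.sum_congr rfl fun i _ => e1 i, Finset.sum_const, Finset.card_univ,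
        Fintype.card_fin, nsmul_eq_mul]
      have : n' + 1 - 1 + 0 = n' := by omega
      rw [this]
    · have e1 : ∀ p : Fin n, (if 1 ≤ 1 + p.val then c 1 * (Mhk c 1 n).det else 0)
          = c 1 * (Mhk c 1 n).det := fun p => if_pos (by omega)
      rw [Finset.sum_congr rfl fun p _ => e1 p, Finset.sum_const, Finset.card_univ,
        Fintype.card_fin, nsmul_eq_mul]
      have : n - 1 + 1 = n := by omega
      rw [this]
  rw [key, hpart1, part2 c m n, hHk]
  have h2 : (2 * n - 2 + m : ℕ) = (n - 1 + m) + (n - 1) := by omega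
  rw [h2]
  push_cast
  ring
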